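/- Let a < b < c be real numbers and put A = (a, a²), B = (b, b²), C = (c, c²) on the parabola y = x². Let ℓ_A be the line through A with slope a + (b + c)/2 (the DA bisector of the interior angle at A, i.e. the line AA' where A' = ((b+c)/2, ((b+c)/2)²)), and let BC be the line y = (b + c)x − bc through B and C. Then ℓ_A and BC meet in a unique point D, D.1 = (2bc − ab − ac)/(b + c − 2a), and (D.1 − b)·(c − a) = (c − D.1)·(b − a); that is, the DA norms satisfy |BD| : |DC| = |AB| : |AC|. -/
import Mathlib


/-- DA angle-bisector theorem: for `a < b < c`, the DA bisector at `A` (the line through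
`(a, a²)` with slope `a + (b+c)/2`) meets the side line `BC : y = (b+c)x − bc` in a
unique point `D`, with `D.1 = (2bc − ab − ac)/(b + c − 2a)` and
`(D.1 − b)(c − a) = (c − D.1)(b − a)`, i.e. `|BD| : |DC| = |AB| : |AC|` in DA norm. -/
theorem da_angle_bisector_theorem (a b c : ℝ) (hab : a < b) (hbc : b < c) :
    (∃! D : ℝ × ℝ,
        D.2 = (a + (b + c) / 2) * D.1 - a * (b + c) / 2 ∧
        D.2 = (b + c) * D.1 - b * c) ∧
    ∀ D : ℝ × ℝ,
      D.2 = (a + (b + c) / 2) * D.1 - a * (b + c) / 2 →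
      D.2 = (b + c) * D.1 - b * c →
      D.1 = (2 * b * c - a * b - a * c) / (b + c - 2 * a) ∧
      (D.1 - b) * (c - a) = (c - D.1) * (b - a) := by
  have hden : b + c - 2 * a ≠ 0 := by nlinarith
  set x₀ : ℝ := (2 * b * c - a * b - a * c) / (b + c - 2 * a) with hx₀
  have key : ∀ D : ℝ × ℝ,
      D.2 = (a + (b + c) / 2) * D.1 - a * (b + c) / 2 →
      D.2 = (b + c) * D.1 - b * c → D.1 = x₀ := by
    intro D h1 h2
    rw [hx₀]
    field_simp
    nlinarith [h1, h2]
  constructor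
  · refine ⟨(x₀, (b + c) * x₀ - b * c), ⟨?_, rfl⟩, ?_⟩
    · show (b + c) * x₀ - b * c = (a + (b + c) / 2) * x₀ - a * (b + c) / 2
      rw [hx₀]
      field_simp
      ring
    · rintro D ⟨h1, h2⟩
      have hx := key D h1 h2
      have : D.2 = (b + c) * x₀ - b * c := by rw [h2, hx]
      exact Prod.ext hx this
  · intro D h1 h2
    have hx := key D h1 h2
    refine ⟨hx, ?_⟩
    rw [hx, hx₀]
    field_simp
    ring
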